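/- For each t < 0, the Angenent oval a_t = {(x,y) ∈ ℝ² : cos x = e^t cosh y, |x| < π/2} is a smooth closed curve, and the family {a_t}_{t<0} is a solution of the curve shortening flow: the normal velocity of the family equals the curvature at each point. -/
import Mathlib


open Real

/-- The Angenent oval at time `t`, as a subset of `ℝ²`. -/
def angenentOval (t : ℝ) : Set (ℝ × ℝ) :=
  {p : ℝ × ℝ | Real.cos p.1 = Real.exp t * Real.cosh p.2 ∧ |p.1| < π / 2}

/-- The defining function `F(t,x,y) = cos x - e^t cosh y` of the Angenent ovals. -/
noncomputable def angenentF (t x y : ℝ) : ℝ := Real.cos x - Real.exp t * Real.cosh y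

/-- On the level set, the squared gradient norm is `1 - e^(2t)`. -/
lemma grad_sq (t x y : ℝ) (h : Real.cos x = Real.exp t * Real.cosh y) :
    (-Real.sin x) ^ 2 + (-Real.exp t * Real.sinh y) ^ 2 = 1 - Real.exp t ^ 2 := by
  have h1 : Real.sin x ^ 2 = 1 - Real.cos x ^ 2 := by
    have := Real.sin_sq_add_cos_sq x; linarith
  have h3 : Real.cos x ^ 2 = Real.exp t ^ 2 * Real.cosh y ^ 2 := by rw [h]; ring
  have h4 : Real.exp t ^ 2 * Real.cosh y ^ 2 - Real.exp t ^ 2 * Real.sinh y ^ 2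
      = Real.exp t ^ 2 := by
    have h2 : Real.cosh y ^ 2 - Real.sinh y ^ 2 = 1 := Real.cosh_sq_sub_sinh_sq y
    nlinarith [h2]
  have hexp : (-Real.sin x) ^ 2 + (-Real.exp t * Real.sinh y) ^ 2
      = Real.sin x ^ 2 + Real.exp t ^ 2 * Real.sinh y ^ 2 := by ring
  rw [hexp]; linarith

theorem angenentOval_is_CSF :
    ∀ t < (0 : ℝ),
      IsCompact (angenentOval t) ∧
      (∀ p ∈ angenentOval t, (-Real.sin p.1, -Real.exp t * Real.sinh p.2) ≠ (0, 0)) ∧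
      (∀ p ∈ angenentOval t,
        -- F_t
        (-Real.exp t * Real.cosh p.2) =
          -- ΔF = F_xx + F_yy
          ((-Real.cos p.1) + (-Real.exp t * Real.cosh p.2)) -
          -- Hess F(∇F,∇F)/|∇F|², with F_xy = 0
          ((-Real.cos p.1) * (-Real.sin p.1) ^ 2 +
              (-Real.exp t * Real.cosh p.2) * (-Real.exp t * Real.sinh p.2) ^ 2) /
            ((-Real.sin p.1) ^ 2 + (-Real.exp t * Real.sinh p.2) ^ 2)) := by
  intro t ht
  have het : Real.exp t < 1 := Real.exp_lt_one_iff.mpr ht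
  have het0 : 0 < Real.exp t := Real.exp_pos t
  have hpos : 0 < 1 - Real.exp t ^ 2 := by nlinarith
  refine ⟨?_, ?_, ?_⟩
  · -- compactness
    have hclosed : angenentOval t =
        {p : ℝ × ℝ | Real.cos p.1 = Real.exp t * Real.cosh p.2} ∩
        {p : ℝ × ℝ | |p.1| ≤ Real.arccos (Real.exp t)} := by
      ext p
      constructor
      · rintro ⟨h1, h2⟩
        refine ⟨h1, ?_⟩
        have hcos : Real.exp t ≤ Real.cos p.1 := by
          have := Real.one_le_cosh p.2
          nlinarith
        have habs : |p.1| ≤ π / 2 := le_of_lt h2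
        have hca : Real.cos |p.1| = Real.cos p.1 := Real.cos_abs p.1
        have harc : Real.arccos (Real.cos |p.1|) = |p.1| :=
          Real.arccos_cos (abs_nonneg _) (le_trans habs (by linarith [Real.pi_pos]))
        have hmono : Real.arcsin (Real.exp t) ≤ Real.arcsin (Real.cos |p.1|) :=
          Real.monotone_arcsin (by rw [hca]; exact hcos)
        have e1 := Real.arccos_eq_pi_div_two_sub_arcsin (Real.exp t)
        have e2 := Real.arccos_eq_pi_div_two_sub_arcsin (Real.cos |p.1|)
        calc |p.1| = Real.arccos (Real.cos |p.1|) := harc.symm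
          _ = π / 2 - Real.arcsin (Real.cos |p.1|) := e2
          _ ≤ π / 2 - Real.arcsin (Real.exp t) := by linarith
          _ = Real.arccos (Real.exp t) := e1.symm
      · rintro ⟨h1, h2⟩
        exact ⟨h1, lt_of_le_of_lt h2 ((Real.arccos_lt_pi_div_two).mpr het0)⟩
    rw [hclosed]
    have hc : IsClosed ({p : ℝ × ℝ | Real.cos p.1 = Real.exp t * Real.cosh p.2} ∩
        {p : ℝ × ℝ | |p.1| ≤ Real.arccos (Real.exp t)}) := by
      apply IsClosed.inter
      · exact isClosed_eq (by fun_prop) (by fun_prop)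
      · exact isClosed_le (by fun_prop) continuous_const
    apply IsCompact.of_isClosed_subset
      (isCompact_Icc.prod isCompact_Icc :
        IsCompact (Set.Icc (-(π/2)) (π/2) ×ˢ Set.Icc (-(2 * Real.exp (-t))) (2 * Real.exp (-t))))
      hc
    rintro p ⟨h1, h2⟩
    have hx : |p.1| ≤ π / 2 := le_trans h2 (le_of_lt ((Real.arccos_lt_pi_div_two).mpr het0))
    have hy : |p.2| ≤ 2 * Real.exp (-t) := by
      have hcosh : Real.cosh p.2 ≤ Real.exp (-t) := by
        have hcos1 : Real.cos p.1 ≤ 1 := Real.cos_le_one p.1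
        have hle : Real.exp t * Real.cosh p.2 ≤ 1 := h1 ▸ hcos1
        have he : Real.exp (-t) * Real.exp t = 1 := by
          rw [← Real.exp_add]; simp
        nlinarith [Real.exp_pos (-t)]
      have h3 : p.2 ≤ Real.exp p.2 := by linarith [Real.add_one_le_exp p.2]
      have h4 : -p.2 ≤ Real.exp (-p.2) := by linarith [Real.add_one_le_exp (-p.2)]
      have hch : Real.cosh p.2 = (Real.exp p.2 + Real.exp (-p.2)) / 2 := Real.cosh_eq p.2
      rw [abs_le]
      constructor
      · nlinarith [Real.exp_pos p.2, Real.exp_pos (-p.2)]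
      · nlinarith [Real.exp_pos p.2, Real.exp_pos (-p.2)]
    exact Set.mem_prod.mpr ⟨Set.mem_Icc.mpr (abs_le.mp hx), Set.mem_Icc.mpr (abs_le.mp hy)⟩
  · rintro p ⟨h1, _⟩ heq
    have h2 := grad_sq t p.1 p.2 h1
    have hx : -Real.sin p.1 = 0 := congrArg Prod.fst heq
    have hy : -Real.exp t * Real.sinh p.2 = 0 := congrArg Prod.snd heq
    rw [hx, hy] at h2
    simp at h2
    nlinarith
  · rintro p ⟨h1, _⟩
    have h2 := grad_sq t p.1 p.2 h1
    rw [h2, h1]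
    field_simp
    nlinarith [h2, sq_nonneg (Real.sin p.1), Real.cosh_sq_sub_sinh_sq p.2,
      mul_pos het0 (Real.cosh_pos (x := p.2))]
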